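/- For the 3-VFCA rule f(x,y,z) = (x₁y₃ + y₁z₁ + y₁z₂, x₂y₃ + y₂z₁ + y₂z₂, x₃y₃ + y₁z₃ + y₂z₃): for all x, y, z in the simplex Δ, f(x,y,z) ∈ Δ, and the rule is complete number-conserving on periodic configurations of any period L. -/

import Mathlib

lemma shift_sum (L : ℕ) (hL : 0 < L) (g : ℤ → ℝ) (hg : ∀ i, g (i + L) = g i) :
    ∑ i ∈ Finset.range L, g ((i : ℤ) + 1) = ∑ i ∈ Finset.range L, g i := by
  obtain ⟨m, rfl⟩ := Nat.exists_eq_succ_of_ne_zero hL.ne'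
  rw [Finset.sum_range_succ, Finset.sum_range_succ']
  have h : g ((m : ℤ) + 1) = g 0 := by
    have := hg 0
    rw [zero_add] at this
    simpa [Nat.cast_succ] using this
  push_cast
  rw [h]

theorem stmt_19 (L : ℕ) (hL : 0 < L)
    (Δ : Set (Fin 3 → ℝ))
    (hΔdef : Δ = {v : Fin 3 → ℝ | (∑ i, v i) = 1 ∧ ∀ i, 0 ≤ v i})
    (f : (Fin 3 → ℝ) → (Fin 3 → ℝ) → (Fin 3 → ℝ) → (Fin 3 → ℝ))
    (hf : ∀ x y z, f x y z =
      ![x 0 * y 2 + y 0 * z 0 + y 0 * z 1,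
        x 1 * y 2 + y 1 * z 0 + y 1 * z 1,
        x 2 * y 2 + y 0 * z 2 + y 1 * z 2])
    (x : ℤ → Fin 3 → ℝ) (hper : ∀ i, x (i + L) = x i)
    (hx : ∀ i, x i ∈ Δ) :
    (∀ u ∈ Δ, ∀ v ∈ Δ, ∀ w ∈ Δ, f u v w ∈ Δ) ∧
    (∀ k, ∑ i ∈ Finset.range L, f (x ((i : ℤ) - 1)) (x (i : ℤ)) (x ((i : ℤ) + 1)) k
      = ∑ i ∈ Finset.range L, x (i : ℤ) k) := by
  subst hΔdef
  have hsum : ∀ i : ℤ, x i 0 + x i 1 + x i 2 = 1 := by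
    intro i
    have := (hx i).1
    simpa [Fin.sum_univ_three] using this
  constructor
  · rintro u ⟨hu1, hu2⟩ v ⟨hv1, hv2⟩ w ⟨hw1, hw2⟩
    simp only [Fin.sum_univ_three] at hu1 hv1 hw1
    refine ⟨?_, ?_⟩
    · rw [hf, Fin.sum_univ_three]
      simp only [Matrix.cons_val_zero, Matrix.cons_val_one, Matrix.head_cons,
        Matrix.cons_val_two, Matrix.tail_cons]
      linear_combination (v 2) * hu1 + (v 0 + v 1) * hw1 + hv1
    · intro i
      rw [hf]
      fin_cases i <;>
      · simp only [Fin.isValue, Matrix.cons_val', Matrix.cons_val_zero, Matrix.empty_val',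
        Matrix.cons_val_fin_one, Matrix.cons_val_one, Matrix.head_cons, Matrix.head_fin_const,
        Matrix.cons_val_two, Matrix.tail_cons, Fin.mk_zero, Fin.mk_one, Fin.reduceFinMk]
        refine add_nonneg (add_nonneg (mul_nonneg ?_ ?_) (mul_nonneg ?_ ?_)) (mul_nonneg ?_ ?_) <;>
          first | exact hu2 _ | exact hv2 _ | exact hw2 _
  · -- conservation
    have hshift : ∀ a b : Fin 3,
        ∑ i ∈ Finset.range L, x ((i : ℤ) - 1) a * x (i : ℤ) b
          = ∑ i ∈ Finset.range L, x (i : ℤ) a * x ((i : ℤ) + 1) b := by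
      intro a b
      have hg : ∀ i : ℤ, (fun j : ℤ => x (j - 1) a * x j b) (i + L)
          = (fun j : ℤ => x (j - 1) a * x j b) i := by
        intro i
        simp only []
        rw [show (i : ℤ) + L - 1 = (i - 1) + L by ring, hper, hper]
      have := shift_sum L hL (fun j : ℤ => x (j - 1) a * x j b) hg
      simp only [add_sub_cancel_right] at this
      exact this.symm
    intro k
    simp only [hf]
    fin_cases k
    · simp only [Fin.isValue, Matrix.cons_val', Matrix.cons_val_zero, Matrix.empty_val',
          Matrix.cons_val_fin_one, Matrix.cons_val_one, Matrix.head_cons, Matrix.head_fin_const,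
          Matrix.cons_val_two, Matrix.tail_cons, Fin.mk_zero, Fin.mk_one, Fin.reduceFinMk]
      rw [Finset.sum_add_distrib, Finset.sum_add_distrib, hshift 0 2]
      rw [← Finset.sum_add_distrib, ← Finset.sum_add_distrib]
      refine Finset.sum_congr rfl fun i _ => ?_
      linear_combination (x (i : ℤ) 0) * hsum ((i : ℤ) + 1)
    · simp only [Fin.isValue, Matrix.cons_val', Matrix.cons_val_zero, Matrix.empty_val',
          Matrix.cons_val_fin_one, Matrix.cons_val_one, Matrix.head_cons, Matrix.head_fin_const,
          Matrix.cons_val_two, Matrix.tail_cons, Fin.mk_zero, Fin.mk_one, Fin.reduceFinMk]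
      rw [Finset.sum_add_distrib, Finset.sum_add_distrib, hshift 1 2]
      rw [← Finset.sum_add_distrib, ← Finset.sum_add_distrib]
      refine Finset.sum_congr rfl fun i _ => ?_
      linear_combination (x (i : ℤ) 1) * hsum ((i : ℤ) + 1)
    · simp only [Fin.isValue, Matrix.cons_val', Matrix.cons_val_zero, Matrix.empty_val',
          Matrix.cons_val_fin_one, Matrix.cons_val_one, Matrix.head_cons, Matrix.head_fin_const,
          Matrix.cons_val_two, Matrix.tail_cons, Fin.mk_zero, Fin.mk_one, Fin.reduceFinMk]
      rw [Finset.sum_add_distrib, Finset.sum_add_distrib,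
        ← hshift 0 2, ← hshift 1 2]
      rw [← Finset.sum_add_distrib, ← Finset.sum_add_distrib]
      refine Finset.sum_congr rfl fun i _ => ?_
      linear_combination (x (i : ℤ) 2) * hsum ((i : ℤ) - 1)
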